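/- Let F be a complex Banach space, let P and P_N (N ∈ ℕ) be bounded linear operators on F that are projections (P ∘ P = P and P_N ∘ P_N = P_N for all N), such that P_N f → P f as N → ∞ for every f ∈ F, and such that the range of P is finite-dimensional. Then ‖(P − P_N) ∘ P‖ → 0 as N → ∞, where ‖·‖ is the operator norm. -/

import Mathlib

open Filter

/-- Projection convergence lemma (first assertion, Chatelin Prop. 3.10):
if projections `P_N` converge pointwise to a projection `P` with
finite-dimensional range, then `‖(P - P_N) ∘ P‖ → 0`. -/
theorem projection_convergence_norm {F : Type*} [NormedAddCommGroup F]
    [NormedSpace ℂ F] [CompleteSpace F]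
    (P : F →L[ℂ] F) (Pn : ℕ → F →L[ℂ] F)
    (hP : P ∘L P = P) (hPn : ∀ N, Pn N ∘L Pn N = Pn N)
    (hconv : ∀ f : F, Tendsto (fun N => Pn N f) atTop (nhds (P f)))
    (hfin : FiniteDimensional ℂ (LinearMap.range (P : F →ₗ[ℂ] F))) :
    Tendsto (fun N => ‖(P - Pn N) ∘L P‖) atTop (nhds 0) := by
  haveI := hfin
  set E := LinearMap.range (P : F →ₗ[ℂ] F) with hE
  let b : Module.Basis (Fin (Module.finrank ℂ E)) ℂ E := Module.finBasis ℂ E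
  let ℓ : Fin (Module.finrank ℂ E) → (E →L[ℂ] ℂ) :=
    fun i => LinearMap.toContinuousLinearMap (b.coord i)
  -- P fixes elements of its range
  have hfix : ∀ i, P ((b i : F)) = (b i : F) := by
    intro i
    obtain ⟨y, hy⟩ := (b i).2
    have := congrArg (fun T : F →L[ℂ] F => T y) hP
    rw [← hy]
    simpa [ContinuousLinearMap.comp_apply] using this
  -- the uniform bound
  have key : ∀ N, ‖(P - Pn N) ∘L P‖ ≤
      ∑ i, ‖ℓ i‖ * ‖P‖ * ‖(P - Pn N) ((b i : F))‖ := by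
    intro N
    apply ContinuousLinearMap.opNorm_le_bound
    · exact Finset.sum_nonneg fun i _ => by positivity
    · intro f
      set x : E := ⟨P f, LinearMap.mem_range_self (P : F →ₗ[ℂ] F) f⟩ with hx
      have hxcoe : (x : F) = ∑ i, b.repr x i • ((b i : F)) := by
        have := congrArg (Submodule.subtype E) (b.sum_repr x)
        simp only [map_sum, map_smul, Submodule.subtype_apply] at this
        exact this.symm
      have h1 : ((P - Pn N) ∘L P) f = ∑ i, b.repr x i • (P - Pn N) ((b i : F)) := by
        rw [ContinuousLinearMap.comp_apply]
        show (P - Pn N) (x : F) = _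
        rw [hxcoe, map_sum]
        simp [map_smul]
      rw [h1]
      calc ‖∑ i, b.repr x i • (P - Pn N) ((b i : F))‖
          ≤ ∑ i, ‖b.repr x i • (P - Pn N) ((b i : F))‖ := norm_sum_le _ _
        _ ≤ ∑ i, (‖ℓ i‖ * ‖P‖ * ‖(P - Pn N) ((b i : F))‖) * ‖f‖ := by
            apply Finset.sum_le_sum
            intro i _
            rw [norm_smul]
            have h2 : ‖b.repr x i‖ ≤ ‖ℓ i‖ * ‖P‖ * ‖f‖ := by
              have h3 : ‖b.repr x i‖ ≤ ‖ℓ i‖ * ‖x‖ := (ℓ i).le_opNorm x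
              have h4 : ‖x‖ ≤ ‖P‖ * ‖f‖ := by
                rw [show ‖x‖ = ‖P f‖ from rfl]
                exact P.le_opNorm f
              calc ‖b.repr x i‖ ≤ ‖ℓ i‖ * ‖x‖ := h3
                _ ≤ ‖ℓ i‖ * (‖P‖ * ‖f‖) := by
                    have : (0:ℝ) ≤ ‖ℓ i‖ := ContinuousLinearMap.opNorm_nonneg _
                    nlinarith [norm_nonneg x, norm_nonneg f]
                _ = ‖ℓ i‖ * ‖P‖ * ‖f‖ := by ring
            calc ‖b.repr x i‖ * ‖(P - Pn N) ((b i : F))‖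
                ≤ (‖ℓ i‖ * ‖P‖ * ‖f‖) * ‖(P - Pn N) ((b i : F))‖ :=
                  mul_le_mul_of_nonneg_right h2 (norm_nonneg _)
              _ = (‖ℓ i‖ * ‖P‖ * ‖(P - Pn N) ((b i : F))‖) * ‖f‖ := by ring
        _ = (∑ i, ‖ℓ i‖ * ‖P‖ * ‖(P - Pn N) ((b i : F))‖) * ‖f‖ :=
            (Finset.sum_mul _ _ _).symm
  -- the bounding sum tends to 0
  have hsum : Tendsto (fun N => ∑ i, ‖ℓ i‖ * ‖P‖ * ‖(P - Pn N) ((b i : F))‖)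
      atTop (nhds 0) := by
    have : (0 : ℝ) = ∑ i : Fin (Module.finrank ℂ E), 0 := by simp
    rw [this]
    apply tendsto_finset_sum
    intro i _
    have h5 : Tendsto (fun N => (P - Pn N) ((b i : F))) atTop (nhds 0) := by
      have := (hconv ((b i : F))).const_sub (P ((b i : F)))
      simpa [ContinuousLinearMap.sub_apply, sub_self] using this
    have h6 : Tendsto (fun N => ‖(P - Pn N) ((b i : F))‖) atTop (nhds 0) := by
      simpa using h5.norm
    have := h6.const_mul (‖ℓ i‖ * ‖P‖)
    simpa [mul_assoc] using this
  exact squeeze_zero (fun N => norm_nonneg _) key hsum
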